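/- arXiv:1604.05419 — 12 statements merged into one kernel-verified Lean document; each statement's English description precedes it below -/
import Mathlib

section
/- For a binary combinator ⊕ on total preorders over a finite set W of worlds, the 'upper bound' condition (for all S ⊆ W, min(≼₁⊕₂, S) ⊆ min(≼₁, S) ∪ min(≼₂, S)) is equivalent to the condition (⊕SPU+): for all x, y, z ∈ W, if x ≺₁ y and z ≺₂ y then x ≺₁⊕₂ y or z ≺₁⊕₂ y. -/
def Tpo {W : Type*} (R : W → W → Prop) : Prop :=
  (∀ x, R x x) ∧ (∀ x y z, R x y → R y z → R x z) ∧ (∀ x y, R x y ∨ R y x)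

def strictP {W : Type*} (R : W → W → Prop) (x y : W) : Prop := R x y ∧ ¬ R y x

def symmP {W : Type*} (R : W → W → Prop) (x y : W) : Prop := R x y ∧ R y x

def minSet {W : Type*} (R : W → W → Prop) (S : Set W) : Set W := {x | x ∈ S ∧ ∀ y ∈ S, R x y}

def SVariants {W : Type*} (R1 R2 : W → W → Prop) (S : Set W) : Prop :=
  ∀ x y, ((x ∈ S ∧ y ∈ S) ∨ (x ∉ S ∧ y ∉ S)) → (R1 x y ↔ R2 x y)

theorem stmt0 {W : Type*} [Fintype W] [Nonempty W]
    (C : (W → W → Prop) → (W → W → Prop) → (W → W → Prop))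
    (hC : ∀ R1 R2, Tpo R1 → Tpo R2 → Tpo (C R1 R2)) :
    (∀ R1 R2, Tpo R1 → Tpo R2 →
        ∀ S : Set W, minSet (C R1 R2) S ⊆ minSet R1 S ∪ minSet R2 S)
    ↔ (∀ R1 R2, Tpo R1 → Tpo R2 → ∀ x y z : W, strictP R1 x y → strictP R2 z y →
        strictP (C R1 R2) x y ∨ strictP (C R1 R2) z y) := by
  constructor
  · intro hub R1 R2 h1 h2 x y z hxy hzy
    have hS := hub R1 R2 h1 h2 {x, y, z}
    have hy : y ∉ minSet R1 {x, y, z} ∪ minSet R2 {x, y, z} := by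
      rintro (⟨_, hm⟩ | ⟨_, hm⟩)
      · exact hxy.2 (hm x (by simp))
      · exact hzy.2 (hm z (by simp))
    have hy2 : y ∉ minSet (C R1 R2) {x, y, z} := fun h => hy (hS h)
    obtain ⟨href, htr, htot⟩ := hC R1 R2 h1 h2
    simp only [minSet, Set.mem_setOf_eq, not_and] at hy2
    have hin : y ∈ ({x, y, z} : Set W) := by simp
    have h' := hy2 hin
    push_neg at h'
    obtain ⟨w, hw, hnw⟩ := h'
    rcases hw with h | h | h
    · rw [h] at hnw; left; exact ⟨(htot x y).resolve_right hnw, hnw⟩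
    · rw [h] at hnw; exact absurd (href y) hnw
    · rw [h] at hnw; right; exact ⟨(htot z y).resolve_right hnw, hnw⟩
  · intro hspu R1 R2 h1 h2 S w hw
    by_contra hn
    simp only [Set.mem_union, not_or, minSet, Set.mem_setOf_eq, not_and] at hn
    obtain ⟨hn1, hn2⟩ := hn
    have hwS : w ∈ S := hw.1
    have h1' := hn1 hwS
    have h2' := hn2 hwS
    push_neg at h1' h2'
    obtain ⟨a, ha, hna⟩ := h1'
    obtain ⟨b, hb, hnb⟩ := h2'
    have sa : strictP R1 a w := ⟨(h1.2.2 a w).resolve_right hna, hna⟩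
    have sb : strictP R2 b w := ⟨(h2.2.2 b w).resolve_right hnb, hnb⟩
    rcases hspu R1 R2 h1 h2 a w b sa sb with h | h
    · exact h.2 (hw.2 a ha)
    · exact h.2 (hw.2 b hb)
end

section
/- For a binary combinator ⊕ on total preorders over a finite set W, the 'lower bound' condition (for all S ⊆ W, either min(≼₁, S) ⊆ min(≼₁⊕₂, S) or min(≼₂, S) ⊆ min(≼₁⊕₂, S)) is equivalent to the condition (⊕WPU+): for all x, y, z ∈ W, if x ≼₁ y and z ≼₂ y then x ≼₁⊕₂ y or z ≼₁⊕₂ y. -/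
theorem stmt1 {W : Type*} [Fintype W] [Nonempty W]
    (C : (W → W → Prop) → (W → W → Prop) → (W → W → Prop))
    (hC : ∀ R1 R2, Tpo R1 → Tpo R2 → Tpo (C R1 R2)) :
    (∀ R1 R2, Tpo R1 → Tpo R2 →
        ∀ S : Set W, minSet R1 S ⊆ minSet (C R1 R2) S ∨ minSet R2 S ⊆ minSet (C R1 R2) S)
    ↔ (∀ R1 R2, Tpo R1 → Tpo R2 → ∀ x y z : W, R1 x y → R2 z y →
        C R1 R2 x y ∨ C R1 R2 z y) := by
  constructor
  · intro h R1 R2 h1 h2 x y z hxy hzy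
    by_contra hc
    push_neg at hc
    obtain ⟨hcx, hcz⟩ := hc
    set S : Set W := {x, y, z} with hS
    have hyS : y ∈ S := Or.inr (Or.inl rfl)
    rcases h R1 R2 h1 h2 S with h' | h'
    · rcases h1.2.2 x z with hxz | hzx
      · have hx : x ∈ minSet R1 S := ⟨Or.inl rfl, by
          rintro w (h | h | h) <;> rw [h]
          · exact h1.1 x
          · exact hxy
          · exact hxz⟩
        exact hcx ((h' hx).2 y hyS)
      · have hz : z ∈ minSet R1 S := ⟨Or.inr (Or.inr rfl), by
          rintro w (h | h | h) <;> rw [h]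
          · exact hzx
          · exact h1.2.1 _ _ _ hzx hxy
          · exact h1.1 z⟩
        exact hcz ((h' hz).2 y hyS)
    · rcases h2.2.2 z x with hzx | hxz
      · have hz : z ∈ minSet R2 S := ⟨Or.inr (Or.inr rfl), by
          rintro w (h | h | h) <;> rw [h]
          · exact hzx
          · exact hzy
          · exact h2.1 z⟩
        exact hcz ((h' hz).2 y hyS)
      · have hx : x ∈ minSet R2 S := ⟨Or.inl rfl, by
          rintro w (h | h | h) <;> rw [h]
          · exact h2.1 x
          · exact h2.2.1 _ _ _ hxz hzy
          · exact hxz⟩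
        exact hcx ((h' hx).2 y hyS)
  · intro h R1 R2 h1 h2 S
    by_contra hc
    push_neg at hc
    obtain ⟨hc1, hc2⟩ := hc
    rw [Set.not_subset] at hc1 hc2
    obtain ⟨x, hx, hx'⟩ := hc1
    obtain ⟨z, hz, hz'⟩ := hc2
    have hxS : x ∈ S := hx.1
    have hzS : z ∈ S := hz.1
    obtain ⟨y1, hy1S, hy1⟩ : ∃ y1 ∈ S, ¬ C R1 R2 x y1 := by
      by_contra hcc
      push_neg at hcc
      exact hx' ⟨hxS, hcc⟩
    obtain ⟨y2, hy2S, hy2⟩ : ∃ y2 ∈ S, ¬ C R1 R2 z y2 := by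
      by_contra hcc
      push_neg at hcc
      exact hz' ⟨hzS, hcc⟩
    have hT := hC R1 R2 h1 h2
    rcases hT.2.2 y1 y2 with h12 | h21
    · rcases h R1 R2 h1 h2 x y1 z (hx.2 y1 hy1S) (hz.2 y1 hy1S) with hh | hh
      · exact hy1 hh
      · exact hy2 (hT.2.1 _ _ _ hh h12)
    · rcases h R1 R2 h1 h2 x y2 z (hx.2 y2 hy2S) (hz.2 y2 hy2S) with hh | hh
      · exact hy1 (hT.2.1 _ _ _ hh h21)
      · exact hy2 hh
end

section
/- If two total preorders ≼₁, ≼₂ on a finite set W are S-variants for some S ⊆ W (i.e., they agree on all pairs from S × S and on all pairs from Sᶜ × Sᶜ), then there exist no x, y₁, y₂ ∈ W with y₁ ≺₁ x ≼₁ y₂ and y₂ ≺₂ x ≼₂ y₁. -/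
theorem stmt2 {W : Type*} [Fintype W] (R1 R2 : W → W → Prop)
    (h1 : Tpo R1) (h2 : Tpo R2) (S : Set W) (hvar : SVariants R1 R2 S) :
    ¬ ∃ x y1 y2 : W, strictP R1 y1 x ∧ R1 x y2 ∧ strictP R2 y2 x ∧ R2 x y1 := by
  rintro ⟨x, y1, y2, ⟨hy1x, hnxy1⟩, hxy2, ⟨hy2x, hnxy2⟩, hxy1⟩
  obtain ⟨_, htr1, _⟩ := h1
  obtain ⟨_, htr2, _⟩ := h2
  -- x and y1 are on different sides of S
  have hside1 : ¬ ((x ∈ S ∧ y1 ∈ S) ∨ (x ∉ S ∧ y1 ∉ S)) := by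
    intro h
    exact hnxy1 ((hvar x y1 h).mpr hxy1)
  have hside2 : ¬ ((x ∈ S ∧ y2 ∈ S) ∨ (x ∉ S ∧ y2 ∉ S)) := by
    intro h
    exact hnxy2 ((hvar x y2 h).mp hxy2)
  have hsame : (y1 ∈ S ∧ y2 ∈ S) ∨ (y1 ∉ S ∧ y2 ∉ S) := by
    by_cases hx : x ∈ S <;> by_cases ha : y1 ∈ S <;> by_cases hb : y2 ∈ S <;> tauto
  have h12 : R1 y1 y2 := htr1 _ _ _ hy1x hxy2
  have hn21 : ¬ R1 y2 y1 := fun h => hnxy1 (htr1 _ _ _ hxy2 h)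
  have h21 : R2 y2 y1 := htr2 _ _ _ hy2x hxy1
  have hn12 : ¬ R2 y1 y2 := fun h => hnxy2 (htr2 _ _ _ hxy1 h)
  exact hn12 ((hvar y1 y2 hsame).mp h12)
end

section
/- Let ⊕ be a combinator on pairs of total preorders over finite W whose domain is restricted to pairs that are S-variants for some S ⊆ W. Then ⊕ satisfies the weak Pareto condition (⊕SPU: x ≺₁ y and x ≺₂ y imply x ≺₁⊕₂ y) if and only if it satisfies the stronger condition (⊕SPU+: x ≺₁ y and z ≺₂ y imply x ≺₁⊕₂ y or z ≺₁⊕₂ y). -/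
theorem stmt3 {W : Type*} [Fintype W]
    (C : (W → W → Prop) → (W → W → Prop) → (W → W → Prop))
    (hC : ∀ R1 R2, Tpo R1 → Tpo R2 → Tpo (C R1 R2)) :
    (∀ R1 R2, Tpo R1 → Tpo R2 → (∃ S : Set W, SVariants R1 R2 S) →
        ∀ x y : W, strictP R1 x y → strictP R2 x y → strictP (C R1 R2) x y)
    ↔ (∀ R1 R2, Tpo R1 → Tpo R2 → (∃ S : Set W, SVariants R1 R2 S) →
        ∀ x y z : W, strictP R1 x y → strictP R2 z y →
          strictP (C R1 R2) x y ∨ strictP (C R1 R2) z y) := by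
  have aux : ∀ {R1 R2 : W → W → Prop} {S : Set W}, SVariants R1 R2 S → ∀ {x y : W},
      ((x ∈ S ∧ y ∈ S) ∨ (x ∉ S ∧ y ∉ S)) → (strictP R1 x y ↔ strictP R2 x y) := by
    intro R1 R2 S hS x y h
    unfold strictP
    rw [hS x y h, hS y x (by tauto)]
  constructor
  · intro hw R1 R2 h1 h2 hex x y z hxy hzy
    obtain ⟨S, hS⟩ := hex
    by_cases hxy' : (x ∈ S ∧ y ∈ S) ∨ (x ∉ S ∧ y ∉ S)
    · exact Or.inl (hw R1 R2 h1 h2 ⟨S, hS⟩ x y hxy ((aux hS hxy').mp hxy))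
    · by_cases hzy' : (z ∈ S ∧ y ∈ S) ∨ (z ∉ S ∧ y ∉ S)
      · exact Or.inr (hw R1 R2 h1 h2 ⟨S, hS⟩ z y ((aux hS hzy').mpr hzy) hzy)
      · have hxz : (x ∈ S ∧ z ∈ S) ∨ (x ∉ S ∧ z ∉ S) := by tauto
        rcases h1.2.2 x z with h | h
        · have h2xz : R2 x z := (hS x z hxz).mp h
          exact Or.inl (hw R1 R2 h1 h2 ⟨S, hS⟩ x y hxy
            ⟨h2.2.1 x z y h2xz hzy.1, fun hyx => hzy.2 (h2.2.1 y x z hyx h2xz)⟩)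
        · exact Or.inr (hw R1 R2 h1 h2 ⟨S, hS⟩ z y
            ⟨h1.2.1 z x y h hxy.1, fun hyz => hxy.2 (h1.2.1 y z x hyz h)⟩ hzy)
  · intro hs R1 R2 h1 h2 hex x y hxy hxy2
    rcases hs R1 R2 h1 h2 hex x y x hxy hxy2 with h | h <;> exact h
end

section
/- Let ⊕ be a combinator on pairs of total preorders over finite W whose domain is restricted to S-variant pairs. Then ⊕ satisfies Pareto weak preference (⊕WPU: x ≼₁ y and x ≼₂ y imply x ≼₁⊕₂ y) if and only if it satisfies (⊕WPU+: x ≼₁ y and z ≼₂ y imply x ≼₁⊕₂ y or z ≼₁⊕₂ y). -/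
theorem stmt4 {W : Type*} [Fintype W]
    (C : (W → W → Prop) → (W → W → Prop) → (W → W → Prop))
    (hC : ∀ R1 R2, Tpo R1 → Tpo R2 → Tpo (C R1 R2)) :
    (∀ R1 R2, Tpo R1 → Tpo R2 → (∃ S : Set W, SVariants R1 R2 S) →
        ∀ x y : W, R1 x y → R2 x y → C R1 R2 x y)
    ↔ (∀ R1 R2, Tpo R1 → Tpo R2 → (∃ S : Set W, SVariants R1 R2 S) →
        ∀ x y z : W, R1 x y → R2 z y → C R1 R2 x y ∨ C R1 R2 z y) := by
  constructor
  · intro h R1 R2 h1 h2 hS x y z hxy hzy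
    obtain ⟨S, hSv⟩ := hS
    obtain ⟨-, t1, tot1⟩ := id h1
    obtain ⟨-, t2, tot2⟩ := id h2
    rcases tot2 x y with h2xy | h2yx
    · exact Or.inl (h R1 R2 h1 h2 ⟨S, hSv⟩ x y hxy h2xy)
    rcases tot1 z y with h1zy | h1yz
    · exact Or.inr (h R1 R2 h1 h2 ⟨S, hSv⟩ z y h1zy hzy)
    rcases Classical.em (x ∈ S ↔ y ∈ S) with hxyS | hxyS
    · exact Or.inl (h R1 R2 h1 h2 ⟨S, hSv⟩ x y hxy ((hSv x y (by tauto)).mp hxy))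
    rcases Classical.em (z ∈ S ↔ y ∈ S) with hzyS | hzyS
    · exact Or.inr (h R1 R2 h1 h2 ⟨S, hSv⟩ z y ((hSv z y (by tauto)).mpr hzy) hzy)
    have hxz : (x ∈ S ∧ z ∈ S) ∨ (x ∉ S ∧ z ∉ S) := by tauto
    have h2xz : R2 x z := (hSv x z hxz).mp (t1 x y z hxy h1yz)
    exact Or.inl (h R1 R2 h1 h2 ⟨S, hSv⟩ x y hxy (t2 x z y h2xz hzy))
  · intro h R1 R2 h1 h2 hS x y hxy h2xy
    rcases h R1 R2 h1 h2 hS x y x hxy h2xy with h' | h' <;> exact h'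
end

section
/- For a combinator ⊕ on total preorders over finite W, the weak lower bound condition (⊕WLB: for all S ⊆ W, min(≼₁, S) ∩ min(≼₂, S) ⊆ min(≼₁⊕₂, S)) is equivalent to (⊕WPU: for all x, y, if x ≼₁ y and x ≼₂ y then x ≼₁⊕₂ y). -/
theorem stmt5 {W : Type*} [Fintype W]
    (C : (W → W → Prop) → (W → W → Prop) → (W → W → Prop))
    (hC : ∀ R1 R2, Tpo R1 → Tpo R2 → Tpo (C R1 R2)) :
    (∀ R1 R2, Tpo R1 → Tpo R2 →
        ∀ S : Set W, minSet R1 S ∩ minSet R2 S ⊆ minSet (C R1 R2) S)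
    ↔ (∀ R1 R2, Tpo R1 → Tpo R2 → ∀ x y : W, R1 x y → R2 x y → C R1 R2 x y) := by
  constructor
  · intro h R1 R2 h1 h2 x y hxy1 hxy2
    have hx : x ∈ minSet (C R1 R2) ({x, y} : Set W) := by
      apply h R1 R2 h1 h2 ({x, y} : Set W)
      constructor <;>
      · refine ⟨Or.inl rfl, ?_⟩
        rintro z (rfl | rfl)
        · first | exact h1.1 z | exact h2.1 z
        · assumption
    exact hx.2 y (Or.inr rfl)
  · intro h R1 R2 h1 h2 S x ⟨⟨hxS, hm1⟩, ⟨_, hm2⟩⟩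
    exact ⟨hxS, fun y hy => h R1 R2 h1 h2 x y (hm1 y hy) (hm2 y hy)⟩
end

section
/- Let ⊕ be a combinator on total preorders over finite W restricted to S-variant pairs of inputs. If ⊕ satisfies the weak lower bound (for all S ⊆ W, min(≼₁,S) ∩ min(≼₂,S) ⊆ min(≼₁⊕₂,S)), then it satisfies the full lower bound: for all S ⊆ W, either min(≼₁,S) ⊆ min(≼₁⊕₂,S) or min(≼₂,S) ⊆ min(≼₁⊕₂,S). -/
theorem stmt6 {W : Type*} [Fintype W]
    (C : (W → W → Prop) → (W → W → Prop) → (W → W → Prop))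
    (hC : ∀ R1 R2, Tpo R1 → Tpo R2 → Tpo (C R1 R2))
    (hWLB : ∀ R1 R2, Tpo R1 → Tpo R2 → (∃ S : Set W, SVariants R1 R2 S) →
        ∀ S : Set W, minSet R1 S ∩ minSet R2 S ⊆ minSet (C R1 R2) S) :
    ∀ R1 R2, Tpo R1 → Tpo R2 → (∃ S : Set W, SVariants R1 R2 S) →
      ∀ S : Set W, minSet R1 S ⊆ minSet (C R1 R2) S ∨ minSet R2 S ⊆ minSet (C R1 R2) S := by
  intro R1 R2 h1 h2 hvar S
  obtain ⟨T, hT⟩ := hvar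
  obtain ⟨r1, t1, c1⟩ := h1
  obtain ⟨r2, t2, c2⟩ := h2
  obtain ⟨rc, tc, cc⟩ := hC R1 R2 ⟨r1, t1, c1⟩ ⟨r2, t2, c2⟩
  have hW := hWLB R1 R2 ⟨r1, t1, c1⟩ ⟨r2, t2, c2⟩ ⟨T, hT⟩
  have hT' : ∀ u w, (u ∈ T ↔ w ∈ T) → (R1 u w ↔ R2 u w) := by
    intro u w h
    apply hT
    by_cases hu : u ∈ T
    · exact Or.inl ⟨hu, h.mp hu⟩
    · exact Or.inr ⟨hu, fun hw => hu (h.mpr hw)⟩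
  have key : ∀ u w, (u ∈ T ↔ w ∈ T) → R1 u w → C R1 R2 u w := by
    intro u w hs h
    have h2' : R2 u w := (hT' u w hs).mp h
    have hu : u ∈ minSet (C R1 R2) {u, w} := by
      apply hW {u, w}
      constructor
      · exact ⟨Or.inl rfl, by rintro y (rfl | rfl); exacts [r1 _, h]⟩
      · exact ⟨Or.inl rfl, by rintro y (rfl | rfl); exacts [r2 _, h2']⟩
    exact hu.2 w (Or.inr rfl)
  by_cases h12 : minSet R1 S ⊆ minSet R2 S
  · exact Or.inl fun x hx => hW S ⟨hx, h12 hx⟩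
  by_cases h21 : minSet R2 S ⊆ minSet R1 S
  · exact Or.inr fun x hx => hW S ⟨h21 hx, hx⟩
  rw [Set.not_subset] at h12 h21
  obtain ⟨y, hy1, hy2⟩ := h12
  obtain ⟨z, hz2, hz1⟩ := h21
  have hyz : ¬ (y ∈ T ↔ z ∈ T) := by
    intro hs
    apply hz1
    have hzy : R1 z y := (hT' z y hs.symm).mpr (hz2.2 y hy1.1)
    exact ⟨hz2.1, fun s hs' => t1 z y s hzy (hy1.2 s hs')⟩
  have hm1 : ∀ x ∈ minSet R1 S, (x ∈ T ↔ y ∈ T) := by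
    intro x hx
    by_contra hxy
    have hxz : (x ∈ T ↔ z ∈ T) := by tauto
    apply hz1
    have hzx : R1 z x := (hT' z x hxz.symm).mpr (hz2.2 x hx.1)
    exact ⟨hz2.1, fun s hs' => t1 z x s hzx (hx.2 s hs')⟩
  have hm2 : ∀ x ∈ minSet R2 S, (x ∈ T ↔ z ∈ T) := by
    intro x hx
    by_contra hxz
    have hxy : (x ∈ T ↔ y ∈ T) := by tauto
    apply hy2
    have hyx : R2 y x := (hT' y x hxy.symm).mp (hy1.2 x hx.1)
    exact ⟨hy1.1, fun s hs' => t2 y x s hyx (hx.2 s hs')⟩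
  rcases cc y z with hcyz | hczy
  · left
    intro a ha
    refine ⟨ha.1, fun s hs' => ?_⟩
    by_cases hsy : (s ∈ T ↔ y ∈ T)
    · exact key a s ((hm1 a ha).trans hsy.symm) (ha.2 s hs')
    · have hsz : (s ∈ T ↔ z ∈ T) := by tauto
      have hay : C R1 R2 a y := key a y (hm1 a ha) (ha.2 y hy1.1)
      have hzs : C R1 R2 z s := key z s hsz.symm ((hT' z s hsz.symm).mpr (hz2.2 s hs'))
      exact tc a y s hay (tc y z s hcyz hzs)
  · right
    intro b hb
    refine ⟨hb.1, fun s hs' => ?_⟩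
    by_cases hsz : (s ∈ T ↔ z ∈ T)
    · have hside : (b ∈ T ↔ s ∈ T) := (hm2 b hb).trans hsz.symm
      exact key b s hside ((hT' b s hside).mpr (hb.2 s hs'))
    · have hsy : (s ∈ T ↔ y ∈ T) := by tauto
      have hbz : C R1 R2 b z := key b z (hm2 b hb) ((hT' b z (hm2 b hb)).mpr (hb.2 z hz2.1))
      have hys : C R1 R2 y s := key y s hsy.symm (hy1.2 s hs')
      exact tc b z s hbz (tc z y s hczy hys)
end

section
/- Let ⊕ be a combinator on total preorders over finite W satisfying the trifurcation property (for all S ⊆ W, min(≼₁⊕₂, S) equals min(≼₁, S), min(≼₂, S), or their union). Then ⊕ satisfies ⊕SPU+ (if x ≺₁ y and z ≺₂ y then x ≺₁⊕₂ y or z ≺₁⊕₂ y), ⊕WPU+ (if x ≼₁ y and z ≼₂ y then x ≼₁⊕₂ y or z ≼₁⊕₂ y), and the no-overtaking property ⊕NO (for i ≠ j in {1,2}, if x ≺ᵢ y and z ≼ⱼ y then x ≺₁⊕₂ y or z ≼₁⊕₂ y). -/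
theorem stmt7 {W : Type*} [Fintype W] [Nonempty W]
    (C : (W → W → Prop) → (W → W → Prop) → (W → W → Prop))
    (hC : ∀ R1 R2, Tpo R1 → Tpo R2 → Tpo (C R1 R2))
    (hTRI : ∀ R1 R2, Tpo R1 → Tpo R2 → ∀ S : Set W,
        minSet (C R1 R2) S = minSet R1 S ∨ minSet (C R1 R2) S = minSet R2 S ∨
          minSet (C R1 R2) S = minSet R1 S ∪ minSet R2 S) :
    ∀ R1 R2, Tpo R1 → Tpo R2 →
      (∀ x y z : W, strictP R1 x y → strictP R2 z y →
        strictP (C R1 R2) x y ∨ strictP (C R1 R2) z y) ∧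
      (∀ x y z : W, R1 x y → R2 z y → C R1 R2 x y ∨ C R1 R2 z y) ∧
      (∀ x y z : W, strictP R1 x y → R2 z y → strictP (C R1 R2) x y ∨ C R1 R2 z y) ∧
      (∀ x y z : W, strictP R2 x y → R1 z y → strictP (C R1 R2) x y ∨ C R1 R2 z y) := by
  intro R1 R2 h1 h2
  have hR : Tpo (C R1 R2) := hC R1 R2 h1 h2
  have notmin : ∀ (Q : W → W → Prop), Tpo Q → ∀ (S : Set W) (y : W), y ∈ S →
      y ∉ minSet Q S → ∃ u ∈ S, strictP Q u y := by
    intro Q hQ S y hyS hy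
    simp only [minSet, Set.mem_setOf_eq, not_and, not_forall] at hy
    obtain ⟨u, huS, hu⟩ := hy hyS
    exact ⟨u, huS, (hQ.2.2 u y).resolve_right hu, hu⟩
  have memmin : ∀ (Q : W → W → Prop), Tpo Q → ∀ (S : Set W) (y a : W), y ∈ minSet Q S →
      a ∈ S → Q a y → a ∈ minSet Q S := by
    intro Q hQ S y a hy ha hQay
    exact ⟨ha, fun u hu => hQ.2.1 a y u hQay (hy.2 u hu)⟩
  refine ⟨?_, ?_, ?_, ?_⟩
  · intro x y z hx hz
    by_cases hy : y ∈ minSet (C R1 R2) ({x, y, z} : Set W)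
    · exfalso
      rcases hTRI R1 R2 h1 h2 ({x, y, z} : Set W) with h | h | h
      · rw [h] at hy; exact hx.2 (hy.2 x (by simp))
      · rw [h] at hy; exact hz.2 (hy.2 z (by simp))
      · rw [h] at hy
        rcases hy with hy | hy
        · exact hx.2 (hy.2 x (by simp))
        · exact hz.2 (hy.2 z (by simp))
    · obtain ⟨u, huS, hu⟩ := notmin _ hR _ y (by simp) hy
      have huy : u ≠ y := fun h => hu.2 (h ▸ hR.1 y)
      simp only [Set.mem_insert_iff, Set.mem_singleton_iff] at huS
      rcases huS with h | h | h
      · subst h; exact Or.inl hu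
      · exact absurd h huy
      · subst h; exact Or.inr hu
  · intro x y z hx hz
    by_cases hy : y ∈ minSet (C R1 R2) ({x, y, z} : Set W)
    · rcases hTRI R1 R2 h1 h2 ({x, y, z} : Set W) with h | h | h
      · left
        rw [h] at hy
        have := memmin R1 h1 _ y x hy (by simp) hx
        rw [← h] at this
        exact this.2 y (by simp)
      · right
        rw [h] at hy
        have := memmin R2 h2 _ y z hy (by simp) hz
        rw [← h] at this
        exact this.2 y (by simp)
      · rw [h] at hy
        rcases hy with hy | hy
        · left
          have hx' := memmin R1 h1 _ y x hy (by simp) hx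
          have : x ∈ minSet (C R1 R2) ({x, y, z} : Set W) := by
            rw [h]; exact Or.inl hx'
          exact this.2 y (by simp)
        · right
          have hz' := memmin R2 h2 _ y z hy (by simp) hz
          have : z ∈ minSet (C R1 R2) ({x, y, z} : Set W) := by
            rw [h]; exact Or.inr hz'
          exact this.2 y (by simp)
    · obtain ⟨u, huS, hu⟩ := notmin _ hR _ y (by simp) hy
      have huy : u ≠ y := fun h => hu.2 (h ▸ hR.1 y)
      simp only [Set.mem_insert_iff, Set.mem_singleton_iff] at huS
      rcases huS with h | h | h
      · subst h; exact Or.inl hu.1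
      · exact absurd h huy
      · subst h; exact Or.inr hu.1
  · intro x y z hx hz
    by_cases hy : y ∈ minSet (C R1 R2) ({x, y, z} : Set W)
    · rcases hTRI R1 R2 h1 h2 ({x, y, z} : Set W) with h | h | h
      · exfalso; rw [h] at hy; exact hx.2 (hy.2 x (by simp))
      · right
        rw [h] at hy
        have := memmin R2 h2 _ y z hy (by simp) hz
        rw [← h] at this
        exact this.2 y (by simp)
      · rw [h] at hy
        rcases hy with hy | hy
        · exact absurd (hy.2 x (by simp)) hx.2
        · right
          have hz' := memmin R2 h2 _ y z hy (by simp) hz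
          have : z ∈ minSet (C R1 R2) ({x, y, z} : Set W) := by
            rw [h]; exact Or.inr hz'
          exact this.2 y (by simp)
    · obtain ⟨u, huS, hu⟩ := notmin _ hR _ y (by simp) hy
      have huy : u ≠ y := fun h => hu.2 (h ▸ hR.1 y)
      simp only [Set.mem_insert_iff, Set.mem_singleton_iff] at huS
      rcases huS with h | h | h
      · subst h; exact Or.inl hu
      · exact absurd h huy
      · subst h; exact Or.inr hu.1
  · intro x y z hx hz
    by_cases hy : y ∈ minSet (C R1 R2) ({x, y, z} : Set W)
    · rcases hTRI R1 R2 h1 h2 ({x, y, z} : Set W) with h | h | h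
      · right
        rw [h] at hy
        have := memmin R1 h1 _ y z hy (by simp) hz
        rw [← h] at this
        exact this.2 y (by simp)
      · exfalso; rw [h] at hy; exact hx.2 (hy.2 x (by simp))
      · rw [h] at hy
        rcases hy with hy | hy
        · right
          have hz' := memmin R1 h1 _ y z hy (by simp) hz
          have : z ∈ minSet (C R1 R2) ({x, y, z} : Set W) := by
            rw [h]; exact Or.inl hz'
          exact this.2 y (by simp)
        · exact absurd (hy.2 x (by simp)) hx.2
    · obtain ⟨u, huS, hu⟩ := notmin _ hR _ y (by simp) hy
      have huy : u ≠ y := fun h => hu.2 (h ▸ hR.1 y)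
      simp only [Set.mem_insert_iff, Set.mem_singleton_iff] at huS
      rcases huS with h | h | h
      · subst h; exact Or.inl hu
      · exact absurd h huy
      · subst h; exact Or.inr hu.1
end

section
/- Let ⊕ be a combinator on total preorders over finite W satisfying ⊕SPU+ (if x ≺₁ y and z ≺₂ y then x ≺₁⊕₂ y or z ≺₁⊕₂ y), ⊕WPU+ (if x ≼₁ y and z ≼₂ y then x ≼₁⊕₂ y or z ≼₁⊕₂ y), and ⊕NO (for i ≠ j, if x ≺ᵢ y and z ≼ⱼ y then x ≺₁⊕₂ y or z ≼₁⊕₂ y). Then for every S ⊆ W, min(≼₁⊕₂, S) equals min(≼₁, S), min(≼₂, S), or min(≼₁, S) ∪ min(≼₂, S). -/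
lemma tpo_finset_min {W : Type*} (R : W → W → Prop) (hR : Tpo R) :
    ∀ T : Finset W, T.Nonempty → ∃ x ∈ T, ∀ y ∈ T, R x y := by
  classical
  intro T hT
  induction T using Finset.induction_on with
  | empty => exact absurd hT (by simp)
  | @insert a T ha ih =>
    rcases T.eq_empty_or_nonempty with rfl | hT'
    · exact ⟨a, by simp, by simp [hR.1 a]⟩
    · obtain ⟨x, hxT, hx⟩ := ih hT'
      rcases hR.2.2 x a with h | h
      · refine ⟨x, Finset.mem_insert_of_mem hxT, ?_⟩
        intro y hy
        rcases Finset.mem_insert.1 hy with rfl | hy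
        · exact h
        · exact hx y hy
      · refine ⟨a, Finset.mem_insert_self a T, ?_⟩
        intro y hy
        rcases Finset.mem_insert.1 hy with rfl | hy
        · exact hR.1 _
        · exact hR.2.1 a x y h (hx y hy)

lemma minSet_nonempty {W : Type*} [Fintype W] (R : W → W → Prop) (hR : Tpo R)
    (S : Set W) (hS : S.Nonempty) : (minSet R S).Nonempty := by
  classical
  obtain ⟨x, hx, h⟩ := tpo_finset_min R hR (Set.toFinite S).toFinset
    (((Set.toFinite S).toFinset_nonempty).mpr hS)
  refine ⟨x, (Set.Finite.mem_toFinset _).1 hx, fun y hy => h y ((Set.Finite.mem_toFinset _).2 hy)⟩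

lemma strict_of_min {W : Type*} (R : W → W → Prop) (hR : Tpo R) (S : Set W) {w a : W}
    (hw : w ∈ minSet R S) (haS : a ∈ S) (ha : a ∉ minSet R S) : strictP R w a := by
  refine ⟨hw.2 a haS, fun haw => ?_⟩
  exact ha ⟨haS, fun y hy => hR.2.1 a w y haw (hw.2 y hy)⟩

theorem stmt8 {W : Type*} [Fintype W] [Nonempty W]
    (C : (W → W → Prop) → (W → W → Prop) → (W → W → Prop))
    (hC : ∀ R1 R2, Tpo R1 → Tpo R2 → Tpo (C R1 R2))
    (hSPU : ∀ R1 R2, Tpo R1 → Tpo R2 → ∀ x y z : W, strictP R1 x y → strictP R2 z y →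
        strictP (C R1 R2) x y ∨ strictP (C R1 R2) z y)
    (hWPU : ∀ R1 R2, Tpo R1 → Tpo R2 → ∀ x y z : W, R1 x y → R2 z y →
        C R1 R2 x y ∨ C R1 R2 z y)
    (hNO1 : ∀ R1 R2, Tpo R1 → Tpo R2 → ∀ x y z : W, strictP R1 x y → R2 z y →
        strictP (C R1 R2) x y ∨ C R1 R2 z y)
    (hNO2 : ∀ R1 R2, Tpo R1 → Tpo R2 → ∀ x y z : W, strictP R2 x y → R1 z y →
        strictP (C R1 R2) x y ∨ C R1 R2 z y) :
    ∀ R1 R2, Tpo R1 → Tpo R2 → ∀ S : Set W,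
      minSet (C R1 R2) S = minSet R1 S ∨ minSet (C R1 R2) S = minSet R2 S ∨
        minSet (C R1 R2) S = minSet R1 S ∪ minSet R2 S := by
  intro R1 R2 h1 h2 S
  rcases S.eq_empty_or_nonempty with rfl | hS
  · left; ext x; simp [minSet]
  have hc : Tpo (C R1 R2) := hC R1 R2 h1 h2
  have hM1 := minSet_nonempty R1 h1 S hS
  have hM2 := minSet_nonempty R2 h2 S hS
  have hM := minSet_nonempty (C R1 R2) hc S hS
  -- minSet(C) ⊆ minSet R1 ∪ minSet R2
  have hsub : ∀ x, x ∈ minSet (C R1 R2) S → x ∈ minSet R1 S ∨ x ∈ minSet R2 S := by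
    intro x hx
    by_contra hcon
    push_neg at hcon
    obtain ⟨hn1, hn2⟩ := hcon
    obtain ⟨w1, hw1⟩ := hM1
    obtain ⟨w2, hw2⟩ := hM2
    have hy1 : strictP R1 w1 x := strict_of_min R1 h1 S hw1 hx.1 hn1
    have hy2 : strictP R2 w2 x := strict_of_min R2 h2 S hw2 hx.1 hn2
    rcases hSPU R1 R2 h1 h2 w1 x w2 hy1 hy2 with h | h
    · exact h.2 (hx.2 w1 hw1.1)
    · exact h.2 (hx.2 w2 hw2.1)
  -- Claim 1: if some a ∈ minSet(C) ∩ minSet R1 with a ∉ minSet R2, then minSet R1 ⊆ minSet(C)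
  have claim1 : ∀ a, a ∈ minSet (C R1 R2) S → a ∈ minSet R1 S → a ∉ minSet R2 S →
      ∀ a', a' ∈ minSet R1 S → a' ∈ minSet (C R1 R2) S := by
    intro a haM haM1 haM2 a' ha'
    obtain ⟨x, hx⟩ := hM2
    have hxa : strictP R2 x a := strict_of_min R2 h2 S hx haM.1 haM2
    have hr1 : R1 a' a := ha'.2 a haM.1
    rcases hNO2 R1 R2 h1 h2 x a a' hxa hr1 with h | h
    · exact absurd (haM.2 x hx.1) h.2
    · exact ⟨ha'.1, fun v hv => hc.2.1 a' a v h (haM.2 v hv)⟩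
  have claim2 : ∀ b, b ∈ minSet (C R1 R2) S → b ∈ minSet R2 S → b ∉ minSet R1 S →
      ∀ b', b' ∈ minSet R2 S → b' ∈ minSet (C R1 R2) S := by
    intro b hbM hbM2 hbM1 b' hb'
    obtain ⟨x, hx⟩ := hM1
    have hxb : strictP R1 x b := strict_of_min R1 h1 S hx hbM.1 hbM1
    have hr2 : R2 b' b := hb'.2 b hbM.1
    rcases hNO1 R1 R2 h1 h2 x b b' hxb hr2 with h | h
    · exact absurd (hbM.2 x hx.1) h.2
    · exact ⟨hb'.1, fun v hv => hc.2.1 b' b v h (hbM.2 v hv)⟩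
  by_cases hA : ∃ a, a ∈ minSet (C R1 R2) S ∧ a ∈ minSet R1 S ∧ a ∉ minSet R2 S
  · obtain ⟨a, haM, haM1, haM2⟩ := hA
    by_cases hB : ∃ b, b ∈ minSet (C R1 R2) S ∧ b ∈ minSet R2 S ∧ b ∉ minSet R1 S
    · obtain ⟨b, hbM, hbM2, hbM1⟩ := hB
      right; right
      ext x
      constructor
      · intro hx; exact hsub x hx
      · rintro (hx | hx)
        · exact claim1 a haM haM1 haM2 x hx
        · exact claim2 b hbM hbM2 hbM1 x hx
    · left
      ext x
      constructor
      · intro hx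
        rcases hsub x hx with h | h
        · exact h
        · by_cases hx1 : x ∈ minSet R1 S
          · exact hx1
          · exact absurd ⟨x, hx, h, hx1⟩ hB
      · intro hx
        exact claim1 a haM haM1 haM2 x hx
  · by_cases hB : ∃ b, b ∈ minSet (C R1 R2) S ∧ b ∈ minSet R2 S ∧ b ∉ minSet R1 S
    · obtain ⟨b, hbM, hbM2, hbM1⟩ := hB
      right; left
      ext x
      constructor
      · intro hx
        rcases hsub x hx with h | h
        · by_cases hx2 : x ∈ minSet R2 S
          · exact hx2
          · exact absurd ⟨x, hx, h, hx2⟩ hA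
        · exact h
      · intro hx
        exact claim2 b hbM hbM2 hbM1 x hx
    · -- every element of minSet(C) is in both minSet R1 and minSet R2
      have hboth : ∀ x, x ∈ minSet (C R1 R2) S → x ∈ minSet R1 S ∧ x ∈ minSet R2 S := by
        intro x hx
        rcases hsub x hx with h | h
        · by_cases hx2 : x ∈ minSet R2 S
          · exact ⟨h, hx2⟩
          · exact absurd ⟨x, hx, h, hx2⟩ hA
        · by_cases hx1 : x ∈ minSet R1 S
          · exact ⟨hx1, h⟩
          · exact absurd ⟨x, hx, h, hx1⟩ hB
      obtain ⟨m, hm⟩ := hM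
      have key : (∀ a ∈ minSet R1 S, a ∈ minSet (C R1 R2) S) ∨
          (∀ b ∈ minSet R2 S, b ∈ minSet (C R1 R2) S) := by
        by_contra hcon
        push_neg at hcon
        obtain ⟨⟨a, ha1, haM⟩, ⟨b, hb2, hbM⟩⟩ := hcon
        have hca : strictP (C R1 R2) m a := strict_of_min (C R1 R2) hc S hm ha1.1 haM
        have hcb : strictP (C R1 R2) m b := strict_of_min (C R1 R2) hc S hm hb2.1 hbM
        rcases hWPU R1 R2 h1 h2 a m b (ha1.2 m hm.1) (hb2.2 m hm.1) with h | h
        · exact hca.2 h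
        · exact hcb.2 h
      rcases key with key | key
      · left
        ext x
        exact ⟨fun hx => (hboth x hx).1, fun hx => key x hx⟩
      · right; left
        ext x
        exact ⟨fun hx => (hboth x hx).2, fun hx => key x hx⟩
end

section
/- For any combinator ⊕ on total preorders over finite W, the conjunction of ⊕SPU+ (x ≺₁ y and z ≺₂ y imply x ≺₁⊕₂ y or z ≺₁⊕₂ y) and ⊕PAR (if x ≺₁⊕₂ y then for each i ∈ {1,2} there exists z with x ∼₁⊕₂ z and z ≺ᵢ y) implies ⊕WPU+ (x ≼₁ y and z ≼₂ y imply x ≼₁⊕₂ y or z ≼₁⊕₂ y). -/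
theorem stmt10 {W : Type*} [Fintype W] [Nonempty W]
    (C : (W → W → Prop) → (W → W → Prop) → (W → W → Prop))
    (hC : ∀ R1 R2, Tpo R1 → Tpo R2 → Tpo (C R1 R2))
    (hSPU : ∀ R1 R2, Tpo R1 → Tpo R2 → ∀ x y z : W, strictP R1 x y → strictP R2 z y →
        strictP (C R1 R2) x y ∨ strictP (C R1 R2) z y)
    (hPAR : ∀ R1 R2, Tpo R1 → Tpo R2 → ∀ x y : W, strictP (C R1 R2) x y →
        (∃ z, symmP (C R1 R2) x z ∧ strictP R1 z y) ∧
        (∃ z, symmP (C R1 R2) x z ∧ strictP R2 z y)) :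
    ∀ R1 R2, Tpo R1 → Tpo R2 → ∀ x y z : W, R1 x y → R2 z y →
      C R1 R2 x y ∨ C R1 R2 z y := by
  intro R1 R2 h1 h2 x y z hxy hzy
  by_contra hcon
  push_neg at hcon
  obtain ⟨hnx, hnz⟩ := hcon
  obtain ⟨hCr, hCt, hCtot⟩ := hC R1 R2 h1 h2
  have hyx : strictP (C R1 R2) y x := ⟨(hCtot x y).resolve_left hnx, hnx⟩
  have hyz : strictP (C R1 R2) y z := ⟨(hCtot z y).resolve_left hnz, hnz⟩
  obtain ⟨⟨w, hw, hw1⟩, -⟩ := hPAR R1 R2 h1 h2 y x hyx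
  obtain ⟨-, ⟨w', hw', hw2⟩⟩ := hPAR R1 R2 h1 h2 y z hyz
  have hw1y : strictP R1 w y :=
    ⟨h1.2.1 _ _ _ hw1.1 hxy, fun h => hw1.2 (h1.2.1 _ _ _ hxy h)⟩
  have hw2y : strictP R2 w' y :=
    ⟨h2.2.1 _ _ _ hw2.1 hzy, fun h => hw2.2 (h2.2.1 _ _ _ hzy h)⟩
  rcases hSPU R1 R2 h1 h2 w y w' hw1y hw2y with h | h
  · exact h.2 hw.1
  · exact h.2 hw'.1
end

section
/- Assume HI ([Ψ−A] = [Ψ] ∩ [Ψ∗¬A]), the left-to-right half of EHI ([(Ψ−A)∗B] ⊆ [Ψ∗B] ∩ [(Ψ∗¬A)∗B]), syntax-independence AGM∗6 and AGM−3 (if A ∉ [Ψ] then [Ψ−A] = [Ψ]), and AGM∗5 (consistency preservation). Then the vacuity principle holds: if A is consistent and B ∈ [Ψ∗A], then [Ψ] ∩ [Ψ∗A] ⊆ [Ψ∗B]. -/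
inductive Form where
  | atom : Nat → Form
  | fls : Form
  | impl : Form → Form → Form

def Form.eval (v : Nat → Prop) : Form → Prop
  | .atom n => v n
  | .fls => False
  | .impl a b => a.eval v → b.eval v

def Form.neg (a : Form) : Form := .impl a .fls
def Form.conj (a b : Form) : Form := Form.neg (a.impl b.neg)
def Form.iff (a b : Form) : Form := (a.impl b).conj (b.impl a)

/-- Classical consequence. -/
def Cn (Γ : Set Form) : Set Form := {φ | ∀ v : Nat → Prop, (∀ ψ ∈ Γ, ψ.eval v) → φ.eval v}

def Consistent (Γ : Set Form) : Prop := ∃ v : Nat → Prop, ∀ ψ ∈ Γ, ψ.eval v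


lemma negneg_Cn (A : Form) : Cn {Form.neg (Form.neg A)} = Cn {A} := by
  have key : ∀ v : Nat → Prop, (Form.neg (Form.neg A)).eval v ↔ A.eval v := by
    intro v
    simp only [Form.neg, Form.eval]
    constructor
    · intro h
      exact Classical.byContradiction fun hb => h fun ha => hb ha
    · intro h hn
      exact hn h
  ext φ
  constructor
  · intro h v hv
    apply h v
    intro ψ hψ
    simp only [Set.mem_singleton_iff] at hψ
    subst hψ
    exact (key v).mpr (hv A rfl)
  · intro h v hv
    apply h v
    intro ψ hψ
    simp only [Set.mem_singleton_iff] at hψ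
    subst hψ
    exact (key v).mp (hv _ rfl)

theorem stmt17 {State : Type*} (bel : State → Set Form)
    (rev con : State → Form → State)
    (hclosed : ∀ Ψ, Cn (bel Ψ) = bel Ψ)
    (hHI : ∀ Ψ A, bel (con Ψ A) = bel Ψ ∩ bel (rev Ψ A.neg))
    (hEHIl : ∀ Ψ A B, bel (rev (con Ψ A) B) ⊆ bel (rev Ψ B) ∩ bel (rev (rev Ψ A.neg) B))
    (hAGM6 : ∀ Ψ A B, Cn {A} = Cn {B} → bel (rev Ψ A) = bel (rev Ψ B))
    (hAGM3c : ∀ Ψ A, A ∉ bel Ψ → bel (con Ψ A) = bel Ψ)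
    (hAGM5 : ∀ Ψ A, Consistent {A} → Consistent (bel (rev Ψ A))) :
    ∀ Ψ A B, Consistent {A} → B ∈ bel (rev Ψ A) →
      bel Ψ ∩ bel (rev Ψ A) ⊆ bel (rev Ψ B) := by
  intro Ψ A B hA hB x hx
  have hrev : bel (rev Ψ A.neg.neg) = bel (rev Ψ A) := hAGM6 Ψ _ _ (negneg_Cn A)
  have hPhi : bel (con Ψ A.neg) = bel Ψ ∩ bel (rev Ψ A) := by
    rw [hHI, hrev]
  set Φ := con Ψ A.neg with hΦ
  have hnB : B.neg ∉ bel Φ := by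
    intro hmem
    rw [hPhi] at hmem
    obtain ⟨v, hv⟩ := hAGM5 Ψ A hA
    exact (hv B.neg hmem.2) (hv B hB)
  have h4 : bel (con Φ B.neg) = bel Φ := hAGM3c Φ B.neg hnB
  have h5 : bel Φ ⊆ bel (rev Φ B) := by
    have := hHI Φ B.neg
    rw [h4, hAGM6 Φ _ _ (negneg_Cn B)] at this
    intro y hy
    exact (this ▸ hy : y ∈ bel Φ ∩ _).2
  have h6 := hEHIl Ψ A.neg B
  rw [hPhi] at h5
  exact (h6 (h5 hx)).1
end

section
/- There is no belief state Ψ satisfying the vacuity principle (if A is consistent and B ∈ [Ψ∗A] then [Ψ] ∩ [Ψ∗A] ⊆ [Ψ∗B]) together with: [Ψ] = Cn(p ∧ q), [Ψ∗¬p] = Cn(¬p ∧ q), and [Ψ∗(p↔¬q)] = Cn(p↔¬q), where p, q are distinct propositional atoms. -/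
theorem stmt18 {State : Type*} (bel : State → Set Form)
    (rev : State → Form → State) (Ψ : State)
    (p q : Form) (hp : p = .atom 0) (hq : q = .atom 1)
    (hVAC : ∀ A B, Consistent {A} → B ∈ bel (rev Ψ A) →
        bel Ψ ∩ bel (rev Ψ A) ⊆ bel (rev Ψ B)) :
    ¬ (bel Ψ = Cn {p.conj q} ∧ bel (rev Ψ p.neg) = Cn {(p.neg).conj q} ∧
        bel (rev Ψ (p.iff q.neg)) = Cn {p.iff q.neg}) := by
  rintro ⟨h1, h2, h3⟩
  subst hp hq
  have hcons : Consistent {Form.neg (Form.atom 0)} := by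
    refine ⟨fun _ => False, ?_⟩
    intro ψ hψ
    simp only [Set.mem_singleton_iff] at hψ
    subst hψ
    simp [Form.neg, Form.eval]
  have hB : (Form.atom 0).iff (Form.neg (Form.atom 1)) ∈ bel (rev Ψ (Form.neg (Form.atom 0))) := by
    rw [h2]
    intro v hv
    have := hv _ rfl
    simp [Form.conj, Form.neg, Form.iff, Form.eval] at this ⊢
    tauto
  have hsub := hVAC _ _ hcons hB
  have hq : Form.atom 1 ∈ bel (rev Ψ ((Form.atom 0).iff (Form.neg (Form.atom 1)))) := by
    apply hsub
    constructor
    · rw [h1]; intro v hv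
      have := hv _ rfl
      simp [Form.conj, Form.neg, Form.eval] at this ⊢
      tauto
    · rw [h2]; intro v hv
      have := hv _ rfl
      simp [Form.conj, Form.neg, Form.eval] at this ⊢
      tauto
  rw [h3] at hq
  have := hq (fun n => n = 0) ?_
  · simp [Form.eval] at this
  · intro ψ hψ
    simp only [Set.mem_singleton_iff] at hψ
    subst hψ
    simp [Form.iff, Form.conj, Form.neg, Form.eval]
end
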